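/- For every natural number N there exist constants C > 0 and g₀ > 0 such that for all 0 < g < g₀: | ∫_{ℝ} exp(−(x² + x⁴)/g) dx − √(πg) · Σ_{k=0}^{N−1} (−1)^k · (Γ(2k + 1/2)/(k!·Γ(1/2))) · g^k | ≤ C · g^{N + 1/2}. In other words, Z(g) ∼ √(πg)·Σ_k a_k g^k as g → 0⁺ with asymptotic coefficients a_k = (−1)^k Γ(2k+1/2)/(k! Γ(1/2)). -/

import Mathlib

open MeasureTheory Set Real Finset


lemma exp_neg_taylor_bound : ∀ (N : ℕ) ⦃t : ℝ⦄, 0 ≤ t →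
    |Real.exp (-t) - ∑ k ∈ Finset.range N, (-1 : ℝ) ^ k * t ^ k / k.factorial|
      ≤ t ^ N / N.factorial := by
  intro N
  induction N with
  | zero =>
    intro t ht
    simp only [Finset.range_zero, Finset.sum_empty, sub_zero, pow_zero, Nat.factorial_zero,
      Nat.cast_one, div_one]
    rw [abs_of_pos (Real.exp_pos _)]
    exact Real.exp_le_one_iff.mpr (by linarith)
  | succ N ih =>
    intro t ht
    set E : ℝ → ℝ := fun s => Real.exp (-s) - ∑ k ∈ Finset.range N, (-1 : ℝ) ^ k * s ^ k / k.factorial with hE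
    set F : ℝ → ℝ := fun s => Real.exp (-s) - ∑ k ∈ Finset.range (N + 1), (-1 : ℝ) ^ k * s ^ k / k.factorial with hF
    have hEcont : Continuous E := by
      apply Continuous.sub (Real.continuous_exp.comp continuous_neg)
      exact continuous_finset_sum _ fun k _ => by continuity
    have hder : ∀ s : ℝ, HasDerivAt F (-(E s)) s := by
      intro s
      have h1 : HasDerivAt (fun s : ℝ => Real.exp (-s)) (Real.exp (-s) * (-1)) s :=
        (hasDerivAt_neg s).exp
      have h2 : HasDerivAt (fun s : ℝ => ∑ k ∈ Finset.range (N + 1), (-1 : ℝ) ^ k * s ^ k / k.factorial)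
          (∑ k ∈ Finset.range (N + 1), (-1 : ℝ) ^ k * (k * s ^ (k - 1)) / k.factorial) s := by
        apply HasDerivAt.fun_sum
        intro k _
        exact ((hasDerivAt_pow k s).const_mul ((-1 : ℝ) ^ k)).div_const _
      have hsum : (∑ k ∈ Finset.range (N + 1), (-1 : ℝ) ^ k * (k * s ^ (k - 1)) / k.factorial)
          = -(∑ k ∈ Finset.range N, (-1 : ℝ) ^ k * s ^ k / k.factorial) := by
        rw [Finset.sum_range_succ']
        simp only [Nat.cast_zero, zero_mul, mul_zero, zero_div, add_zero, pow_zero, one_mul]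
        rw [← Finset.sum_neg_distrib]
        refine Finset.sum_congr rfl fun i _ => ?_
        have h3 : ((i + 1).factorial : ℝ) = (i + 1) * i.factorial := by
          rw [Nat.factorial_succ]; push_cast; ring
        have h4 : (i.factorial : ℝ) ≠ 0 := Nat.cast_ne_zero.mpr i.factorial_ne_zero
        rw [h3]
        simp only [Nat.add_sub_cancel]
        have h5 : ((i:ℝ) + 1) ≠ 0 := by positivity
        field_simp
        rw [pow_succ]
        push_cast
        ring
      have := h1.fun_sub h2
      rw [hsum] at this
      refine this.congr_deriv ?_
      simp [hE]
      ring
    have hF0 : F 0 = 0 := by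
      simp only [hF, neg_zero, Real.exp_zero]
      rw [Finset.sum_eq_single 0]
      · simp
      · intro k _ hk
        simp [zero_pow hk]
      · simp
    have hFt : F t = ∫ s in (0:ℝ)..t, -(E s) := by
      rw [intervalIntegral.integral_eq_sub_of_hasDerivAt (fun s _ => hder s)
        ((hEcont.neg).intervalIntegrable 0 t), hF0, sub_zero]
    have hbound : |F t| ≤ ∫ s in (0:ℝ)..t, s ^ N / N.factorial := by
      rw [hFt, ← Real.norm_eq_abs]
      have := intervalIntegral.norm_integral_le_of_norm_le (μ := volume) (a := 0) (b := t)
        (f := fun s => -(E s)) (g := fun s => s ^ N / N.factorial) ht ?_ ?_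
      · exact this
      · filter_upwards with s hs
        rw [Real.norm_eq_abs, abs_neg]
        exact ih hs.1.le
      · exact (by continuity : Continuous fun s : ℝ => s ^ N / N.factorial).intervalIntegrable 0 t
    calc |F t| ≤ ∫ s in (0:ℝ)..t, s ^ N / N.factorial := hbound
      _ = t ^ (N + 1) / (N + 1).factorial := by
        rw [intervalIntegral.integral_div, integral_pow]
        rw [Nat.factorial_succ]
        push_cast
        rw [zero_pow (Nat.succ_ne_zero N)]
        rw [sub_zero, div_div]


lemma integrable_pow_mul_exp_neg_sq (n : ℕ) :
    Integrable (fun y : ℝ => y ^ n * Real.exp (-y ^ 2)) := by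
  have := integrable_rpow_mul_exp_neg_mul_sq (b := 1) one_pos (s := (n : ℝ))
    (lt_of_lt_of_le neg_one_lt_zero (Nat.cast_nonneg n))
  simpa [Real.rpow_natCast] using this

lemma integral_pow_mul_exp_neg_sq (k : ℕ) :
    ∫ y : ℝ, y ^ (4 * k) * Real.exp (-y ^ 2) = Real.Gamma (2 * k + 1 / 2) := by
  have heven : ∀ y : ℝ, |y| ^ (4 * k) * Real.exp (-|y| ^ 2)
      = y ^ (4 * k) * Real.exp (-y ^ 2) := by
    intro y
    rw [pow_abs, abs_of_nonneg (Even.pow_nonneg ⟨2 * k, by ring⟩ y), sq_abs]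
  calc ∫ y : ℝ, y ^ (4 * k) * Real.exp (-y ^ 2)
      = ∫ y : ℝ, (fun u : ℝ => u ^ (4 * k) * Real.exp (-u ^ 2)) |y| := by
        exact integral_congr_ae (Filter.Eventually.of_forall fun y => (heven y).symm)
    _ = 2 * ∫ y in Ioi (0:ℝ), y ^ (4 * k) * Real.exp (-y ^ 2) :=
        _root_.integral_comp_abs (f := fun u : ℝ => u ^ (4 * k) * Real.exp (-u ^ 2))
    _ = 2 * ∫ y in Ioi (0:ℝ), y ^ ((4 * k : ℕ) : ℝ) * Real.exp (-y ^ (2:ℝ)) := by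
        congr 1
        refine setIntegral_congr_fun measurableSet_Ioi fun y hy => ?_
        rw [Real.rpow_natCast, Real.rpow_two]
    _ = 2 * ((1 / 2) * Real.Gamma ((((4 * k : ℕ) : ℝ) + 1) / 2)) := by
        rw [integral_rpow_mul_exp_neg_rpow two_pos (lt_of_lt_of_le neg_one_lt_zero (Nat.cast_nonneg _))]
    _ = Real.Gamma (2 * k + 1 / 2) := by
        rw [← mul_assoc]
        norm_num
        congr 1
        ring

/-- Asymptotic expansion of the quartic-oscillator partition function: for every
`N` there are `C > 0` and `g₀ > 0` such that for all `0 < g < g₀`,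
`|Z(g) − √(πg) Σ_{k<N} (−1)^k (Γ(2k+1/2)/(k! Γ(1/2))) g^k| ≤ C g^{N+1/2}`. -/
theorem quartic_partition_asymptotic_expansion (N : ℕ) :
    ∃ C > (0 : ℝ), ∃ g₀ > (0 : ℝ), ∀ g : ℝ, 0 < g → g < g₀ →
      |(∫ x : ℝ, Real.exp (-(x ^ 2 + x ^ 4) / g)) -
          Real.sqrt (Real.pi * g) *
            ∑ k ∈ Finset.range N,
              (-1 : ℝ) ^ k *
                (Real.Gamma (2 * k + 1 / 2) / (k.factorial * Real.Gamma (1 / 2))) * g ^ k|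
        ≤ C * g ^ ((N : ℝ) + 1 / 2) := by
  have hΓpos : 0 < Real.Gamma (2 * N + 1 / 2) := Real.Gamma_pos_of_pos (by positivity)
  have hΓfac : (0:ℝ) < Real.Gamma (2 * N + 1 / 2) / N.factorial := by positivity
  refine ⟨Real.Gamma (2 * N + 1 / 2) / N.factorial, hΓfac, 1, one_pos, fun g hg hg1 => ?_⟩
  have hsg : (0:ℝ) < Real.sqrt g := Real.sqrt_pos.mpr hg
  have hsq : Real.sqrt g ^ 2 = g := Real.sq_sqrt hg.le
  -- change of variables
  have h2 : ∀ x : ℝ, Real.exp (-((Real.sqrt g * x) ^ 2 + (Real.sqrt g * x) ^ 4) / g)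
      = Real.exp (-(x ^ 2 + g * x ^ 4)) := by
    intro x
    congr 1
    have h4 : Real.sqrt g ^ 4 = g ^ 2 := by
      rw [show 4 = 2 * 2 from rfl, pow_mul, hsq]
    rw [mul_pow, mul_pow, hsq, h4]
    field_simp
  have key : (∫ x : ℝ, Real.exp (-(x ^ 2 + g * x ^ 4)))
      = |(Real.sqrt g)⁻¹| • ∫ x : ℝ, Real.exp (-(x ^ 2 + x ^ 4) / g) := by
    rw [← MeasureTheory.Measure.integral_comp_mul_left (fun x : ℝ => Real.exp (-(x ^ 2 + x ^ 4) / g)) (Real.sqrt g)]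
    exact integral_congr_ae (.of_forall fun x => (h2 x).symm)
  rw [abs_of_pos (inv_pos.mpr hsg), smul_eq_mul] at key
  have hA : (∫ x : ℝ, Real.exp (-(x ^ 2 + x ^ 4) / g))
      = Real.sqrt g * ∫ y : ℝ, Real.exp (-(y ^ 2 + g * y ^ 4)) := by
    rw [key, ← mul_assoc, mul_inv_cancel₀ (ne_of_gt hsg), one_mul]
  -- integrability of the full integrand
  have hφint : Integrable (fun y : ℝ => Real.exp (-(y ^ 2 + g * y ^ 4))) := by
    apply (integrable_exp_neg_mul_sq one_pos).mono'
    · have hc : Continuous fun y : ℝ => -(y ^ 2 + g * y ^ 4) := by fun_prop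
      exact (Real.continuous_exp.comp hc).aestronglyMeasurable
    · filter_upwards with y
      rw [Real.norm_eq_abs, abs_of_pos (Real.exp_pos _)]
      apply Real.exp_le_exp.mpr
      have h5 : 0 ≤ g * y ^ 4 := mul_nonneg hg.le (by positivity)
      nlinarith
  have hint4 : ∀ k : ℕ, Integrable (fun y : ℝ => y ^ (4 * k) * Real.exp (-y ^ 2)) :=
    fun k => integrable_pow_mul_exp_neg_sq _
  -- the partial-sum function
  set S : ℝ → ℝ := fun y =>
    Real.exp (-y ^ 2) * ∑ k ∈ Finset.range N, (-1:ℝ) ^ k * (g * y ^ 4) ^ k / k.factorial with hSdef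
  have hSeq : S = fun y => ∑ k ∈ Finset.range N,
      ((-1:ℝ) ^ k * g ^ k / k.factorial) * (y ^ (4 * k) * Real.exp (-y ^ 2)) := by
    funext y
    simp only [hSdef]
    rw [Finset.mul_sum]
    refine Finset.sum_congr rfl fun k _ => ?_
    rw [mul_pow, ← pow_mul]
    ring
  have hSint : Integrable S := by
    rw [hSeq]; exact integrable_finset_sum _ fun k _ => (hint4 k).const_mul _
  have hSval : ∫ y : ℝ, S y
      = ∑ k ∈ Finset.range N, ((-1:ℝ) ^ k * g ^ k / k.factorial) * Real.Gamma (2 * k + 1 / 2) := by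
    rw [hSeq, integral_finset_sum _ fun k _ => (hint4 k).const_mul _]
    exact Finset.sum_congr rfl fun k _ => by
      rw [integral_const_mul, integral_pow_mul_exp_neg_sq]
  -- main term equality
  have hπ : Real.sqrt Real.pi ≠ 0 := by positivity
  have hmain : Real.sqrt (Real.pi * g) *
      ∑ k ∈ Finset.range N, (-1:ℝ) ^ k *
        (Real.Gamma (2 * k + 1 / 2) / (k.factorial * Real.Gamma (1 / 2))) * g ^ k
      = Real.sqrt g * ∫ y : ℝ, S y := by
    rw [hSval, Real.sqrt_mul Real.pi_pos.le, Real.Gamma_one_half_eq, Finset.mul_sum,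
      Finset.mul_sum]
    refine Finset.sum_congr rfl fun k _ => ?_
    have hk : (k.factorial : ℝ) ≠ 0 := Nat.cast_ne_zero.mpr k.factorial_ne_zero
    field_simp
  -- remainder bound
  have hptbound : ∀ y : ℝ, |Real.exp (-(y ^ 2 + g * y ^ 4)) - S y|
      ≤ Real.exp (-y ^ 2) * ((g * y ^ 4) ^ N / N.factorial) := by
    intro y
    have h1 : Real.exp (-(y ^ 2 + g * y ^ 4))
        = Real.exp (-y ^ 2) * Real.exp (-(g * y ^ 4)) := by
      rw [← Real.exp_add]; ring_nf
    have h5 : 0 ≤ g * y ^ 4 := mul_nonneg hg.le (by positivity)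
    rw [h1, hSdef, ← mul_sub, abs_mul, abs_of_pos (Real.exp_pos _)]
    exact mul_le_mul_of_nonneg_left (exp_neg_taylor_bound N h5) (Real.exp_pos _).le
  have hbeq : (fun y : ℝ => Real.exp (-y ^ 2) * ((g * y ^ 4) ^ N / N.factorial))
      = fun y : ℝ => (g ^ N / N.factorial) * (y ^ (4 * N) * Real.exp (-y ^ 2)) := by
    funext y
    rw [mul_pow, ← pow_mul]
    ring
  have hbint : Integrable (fun y : ℝ => Real.exp (-y ^ 2) * ((g * y ^ 4) ^ N / N.factorial)) := by
    rw [hbeq]; exact (hint4 N).const_mul _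
  have hrem : |(∫ y : ℝ, Real.exp (-(y ^ 2 + g * y ^ 4))) - ∫ y : ℝ, S y|
      ≤ g ^ N * (Real.Gamma (2 * N + 1 / 2) / N.factorial) := by
    rw [← integral_sub hφint hSint, ← Real.norm_eq_abs]
    refine (norm_integral_le_of_norm_le hbint (.of_forall fun y => ?_)).trans (le_of_eq ?_)
    · rw [Real.norm_eq_abs]; exact hptbound y
    · rw [hbeq, integral_const_mul, integral_pow_mul_exp_neg_sq]
      field_simp
  -- finish
  rw [hA, hmain, ← mul_sub, abs_mul, abs_of_pos hsg]
  have hrpow : g ^ ((N : ℝ) + 1 / 2) = g ^ N * Real.sqrt g := by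
    rw [Real.rpow_add hg, Real.rpow_natCast, ← Real.sqrt_eq_rpow]
  rw [hrpow]
  calc Real.sqrt g * |(∫ y : ℝ, Real.exp (-(y ^ 2 + g * y ^ 4))) - ∫ y : ℝ, S y|
      ≤ Real.sqrt g * (g ^ N * (Real.Gamma (2 * N + 1 / 2) / N.factorial)) :=
        mul_le_mul_of_nonneg_left hrem hsg.le
    _ = Real.Gamma (2 * N + 1 / 2) / N.factorial * (g ^ N * Real.sqrt g) := by ring
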